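/- Let n₁, n₂ ≥ 1, let ν₁, ν₂ > 0 be real weights, let d ≥ 0, and let P be a nonzero real polynomial on ℝ^{n₁}×ℝ^{n₂} that is weighted homogeneous of degree d, i.e. P(t^{ν₁}·X₁, t^{ν₂}·X₂) = t^d·P(X₁,X₂) for all t > 0 and all (X₁,X₂). Let r : ℝ^{n₁}×ℝ^{n₂} → ℝ satisfy: for every ε > 0 there is δ > 0 with |r(X₁,X₂)| ≤ ε·(‖X₁‖^{1/ν₁} + ‖X₂‖^{1/ν₂})^d whenever ‖(X₁,X₂)‖ < δ, and assume P(X) + r(X) ≥ 0 for all X in a neighborhood of 0. Let P₀ be the nonzero bihomogeneous component of P of minimal degree in X₁ (for a weighted homogeneous P this is a single bihomogeneous component). Then P₀(X) ≥ 0 for all X ∈ ℝ^{n₁}×ℝ^{n₂}. -/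

import Mathlib

/-- The degree in the first group of variables of a monomial exponent on `Fin n₁ ⊕ Fin n₂`. -/
def firstDegree {n₁ n₂ : ℕ} (m : Fin n₁ ⊕ Fin n₂ →₀ ℕ) : ℕ :=
  ∑ i : Fin n₁, m (Sum.inl i)

/-- The minimal degree in the first group of variables among monomials of `P`. -/
noncomputable def minFirstDegree {n₁ n₂ : ℕ} (P : MvPolynomial (Fin n₁ ⊕ Fin n₂) ℝ) : ℕ :=
  sInf {l : ℕ | ∃ m ∈ P.support, firstDegree m = l}

/-- The bihomogeneous component of `P` of minimal degree in the first group of variables: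
the sum of the monomials of `P` whose first-group degree is minimal. -/
noncomputable def minComponent {n₁ n₂ : ℕ} (P : MvPolynomial (Fin n₁ ⊕ Fin n₂) ℝ) :
    MvPolynomial (Fin n₁ ⊕ Fin n₂) ℝ :=
  ∑ m ∈ P.support.filter (fun m => firstDegree m = minFirstDegree P),
    MvPolynomial.monomial m (MvPolynomial.coeff m P)

open MvPolynomial Set Filter Topology

/-- under the hypotheses of the cancellation rule (Statement 13), if `P ≠ 0`
and `P₀` is the nonzero bihomogeneous component of `P` of minimal degree in `X₁`, then
`P₀ ≥ 0` everywhere. -/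
theorem boundary_jets_stmt14 (n₁ n₂ : ℕ) (h₁ : 1 ≤ n₁) (h₂ : 1 ≤ n₂)
    (ν₁ ν₂ : ℝ) (hν₁ : 0 < ν₁) (hν₂ : 0 < ν₂) (d : ℝ) (hd : 0 ≤ d)
    (P : MvPolynomial (Fin n₁ ⊕ Fin n₂) ℝ) (hP : P ≠ 0)
    (hhom : ∀ t : ℝ, 0 < t → ∀ X : EuclideanSpace ℝ (Fin n₁) × EuclideanSpace ℝ (Fin n₂),
      MvPolynomial.eval (Sum.elim (fun i => t ^ ν₁ * X.1 i) fun i => t ^ ν₂ * X.2 i) P =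
        t ^ d * MvPolynomial.eval (Sum.elim (fun i => X.1 i) fun i => X.2 i) P)
    (r : EuclideanSpace ℝ (Fin n₁) × EuclideanSpace ℝ (Fin n₂) → ℝ)
    (hr : ∀ ε > 0, ∃ δ > 0,
      ∀ X : EuclideanSpace ℝ (Fin n₁) × EuclideanSpace ℝ (Fin n₂), ‖X‖ < δ →
        |r X| ≤ ε * (‖X.1‖ ^ (1 / ν₁) + ‖X.2‖ ^ (1 / ν₂)) ^ d)
    (δ₀ : ℝ) (hδ₀ : 0 < δ₀)
    (hpos : ∀ X : EuclideanSpace ℝ (Fin n₁) × EuclideanSpace ℝ (Fin n₂), ‖X‖ < δ₀ →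
      0 ≤ MvPolynomial.eval (Sum.elim (fun i => X.1 i) fun i => X.2 i) P + r X) :
    ∀ X : EuclideanSpace ℝ (Fin n₁) × EuclideanSpace ℝ (Fin n₂),
      0 ≤ MvPolynomial.eval (Sum.elim (fun i => X.1 i) fun i => X.2 i) (minComponent P) := by
  intro X
  set l₀ := minFirstDegree P with hl₀
  -- minimality
  have hmin : ∀ m ∈ P.support, l₀ ≤ firstDegree m := fun m hm =>
    Nat.sInf_le ⟨m, hm, rfl⟩
  -- the "monomial value" function
  set A : (Fin n₁ ⊕ Fin n₂ →₀ ℕ) → ℝ := fun m =>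
    (∏ i, X.1 i ^ m (Sum.inl i)) * ∏ i, X.2 i ^ m (Sum.inr i) with hA
  -- expansion of eval at (s • X₁, X₂)
  have expand : ∀ s : ℝ,
      MvPolynomial.eval (Sum.elim (fun i => s * X.1 i) fun i => X.2 i) P =
      ∑ m ∈ P.support, MvPolynomial.coeff m P * (s ^ firstDegree m * A m) := by
    intro s
    rw [MvPolynomial.eval_eq']
    refine Finset.sum_congr rfl fun m _ => ?_
    rw [Fintype.prod_sum_type]
    simp only [Sum.elim_inl, Sum.elim_inr, mul_pow, Finset.prod_mul_distrib,
      Finset.prod_pow_eq_pow_sum, hA]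
    ring_nf
    rfl
  -- Step 1: positivity of F s for s ∈ (0,1]
  have step1 : ∀ s ∈ Ioc (0:ℝ) 1,
      0 ≤ MvPolynomial.eval (Sum.elim (fun i => s * X.1 i) fun i => X.2 i) P := by
    rintro s ⟨hs0, hs1⟩
    set F := MvPolynomial.eval (Sum.elim (fun i => s * X.1 i) fun i => X.2 i) P with hF
    set C : ℝ := (‖X.1‖ ^ (1 / ν₁) + ‖X.2‖ ^ (1 / ν₂)) with hC
    have hCnn : 0 ≤ C := by
      have := Real.rpow_nonneg (norm_nonneg X.1) (1/ν₁)
      have := Real.rpow_nonneg (norm_nonneg X.2) (1/ν₂)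
      positivity
    have key : ∀ ε > (0:ℝ), -(ε * C ^ d) ≤ F := by
      intro ε hε
      obtain ⟨δ, hδ, hrb⟩ := hr ε hε
      -- the scaled point
      set Y : ℝ → EuclideanSpace ℝ (Fin n₁) × EuclideanSpace ℝ (Fin n₂) := fun t =>
        ((t ^ ν₁) • (s • X.1), (t ^ ν₂) • X.2) with hY
      have hYt : Tendsto Y (𝓝[>] 0) (𝓝 0) := by
        have h1 : Tendsto (fun t : ℝ => t ^ ν₁) (𝓝[>] 0) (𝓝 0) := by
          have := (Real.continuousAt_rpow_const 0 ν₁ (Or.inr hν₁.le)).tendsto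
          rw [Real.zero_rpow hν₁.ne'] at this
          exact this.mono_left nhdsWithin_le_nhds
        have h2 : Tendsto (fun t : ℝ => t ^ ν₂) (𝓝[>] 0) (𝓝 0) := by
          have := (Real.continuousAt_rpow_const 0 ν₂ (Or.inr hν₂.le)).tendsto
          rw [Real.zero_rpow hν₂.ne'] at this
          exact this.mono_left nhdsWithin_le_nhds
        have : Tendsto Y (𝓝[>] 0) (𝓝 ((0:ℝ) • (s • X.1), (0:ℝ) • X.2)) :=
          (h1.smul_const _).prodMk_nhds (h2.smul_const _)
        rw [show ((0:ℝ) • (s • X.1), (0:ℝ) • X.2) = (0 : EuclideanSpace ℝ (Fin n₁) × EuclideanSpace ℝ (Fin n₂)) by simp] at this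
        exact this
      have hsmall : ∀ᶠ t in 𝓝[>] (0:ℝ), ‖Y t‖ < min δ δ₀ := by
        have := hYt.norm
        simp only [norm_zero] at this
        exact this.eventually_lt_const (lt_min hδ hδ₀)
      obtain ⟨t, htY, ht0⟩ := (hsmall.and self_mem_nhdsWithin).exists
      have ht0 : (0:ℝ) < t := ht0
      have htd : (0:ℝ) < t ^ d := Real.rpow_pos_of_pos ht0 d
      -- evaluate P at Y t via homogeneity
      have hYeval : MvPolynomial.eval
          (Sum.elim (fun i => (Y t).1 i) fun i => (Y t).2 i) P = t ^ d * F := by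
        have := hhom t ht0 (s • X.1, X.2)
        have heq : (Sum.elim (fun i => (Y t).1 i) fun i => (Y t).2 i)
            = (Sum.elim (fun i => t ^ ν₁ * (s • X.1 : EuclideanSpace ℝ (Fin n₁)) i)
                fun i => t ^ ν₂ * (X.2 : EuclideanSpace ℝ (Fin n₂)) i) := by
          funext j
          cases j <;> simp [hY, PiLp.smul_apply, smul_eq_mul]
        rw [heq, this]
        have heq2 : (Sum.elim (fun i => (s • X.1, X.2).1 i) fun i => (s • X.1, X.2).2 i)
            = (Sum.elim (fun i => s * X.1 i) fun i => X.2 i) := by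
          funext j
          cases j <;> simp [smul_eq_mul]
        rw [heq2]
      -- bound on r (Y t)
      have hnorm1 : ‖(Y t).1‖ = t ^ ν₁ * (s * ‖X.1‖) := by
        simp [hY, norm_smul, abs_of_pos ht0, abs_of_pos hs0,
          abs_of_nonneg (Real.rpow_nonneg ht0.le ν₁), mul_assoc]
      have hnorm2 : ‖(Y t).2‖ = t ^ ν₂ * ‖X.2‖ := by
        simp [hY, norm_smul, abs_of_nonneg (Real.rpow_nonneg ht0.le ν₂)]
      have e1 : (t ^ ν₁) ^ (1/ν₁) = t := by
        rw [← Real.rpow_mul ht0.le, mul_one_div, div_self hν₁.ne', Real.rpow_one]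
      have hb1 : ‖(Y t).1‖ ^ (1/ν₁) ≤ t * ‖X.1‖ ^ (1/ν₁) := by
        rw [hnorm1, Real.mul_rpow (Real.rpow_nonneg ht0.le _) (by positivity), e1]
        have : (s * ‖X.1‖) ^ (1/ν₁) ≤ ‖X.1‖ ^ (1/ν₁) :=
          Real.rpow_le_rpow (by positivity) (by nlinarith [norm_nonneg X.1]) (by positivity)
        exact mul_le_mul_of_nonneg_left this ht0.le
      have hb2 : ‖(Y t).2‖ ^ (1/ν₂) = t * ‖X.2‖ ^ (1/ν₂) := by
        rw [hnorm2, Real.mul_rpow (Real.rpow_nonneg ht0.le _) (norm_nonneg _),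
          ← Real.rpow_mul ht0.le, mul_one_div, div_self hν₂.ne', Real.rpow_one]
      have hrY : |r (Y t)| ≤ ε * (t ^ d * C ^ d) := by
        have h0 := hrb (Y t) (lt_of_lt_of_le htY (min_le_left _ _))
        have hsum : ‖(Y t).1‖ ^ (1/ν₁) + ‖(Y t).2‖ ^ (1/ν₂) ≤ t * C := by
          rw [hC, mul_add]
          exact add_le_add hb1 hb2.le
        have hpow : (‖(Y t).1‖ ^ (1/ν₁) + ‖(Y t).2‖ ^ (1/ν₂)) ^ d ≤ (t * C) ^ d := by
          apply Real.rpow_le_rpow (by positivity) hsum hd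
        rw [Real.mul_rpow ht0.le hCnn] at hpow
        calc |r (Y t)| ≤ ε * (‖(Y t).1‖ ^ (1/ν₁) + ‖(Y t).2‖ ^ (1/ν₂)) ^ d := h0
          _ ≤ ε * (t ^ d * C ^ d) := by
              exact mul_le_mul_of_nonneg_left hpow hε.le
      have hposY := hpos (Y t) (lt_of_lt_of_le htY (min_le_right _ _))
      rw [hYeval] at hposY
      -- conclude
      have hkey : t ^ d * (-(ε * C ^ d)) ≤ t ^ d * F := by
        have h1 := neg_abs_le (r (Y t))
        have he : t ^ d * (-(ε * C ^ d)) = -(ε * (t ^ d * C ^ d)) := by ring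
        rw [he]
        linarith [hrY, hposY, le_abs_self (r (Y t))]
      exact (mul_le_mul_iff_right₀ htd).mp hkey
    -- from key : F ≥ -ε C^d for all ε
    by_contra hneg
    push_neg at hneg
    have hCd : (0:ℝ) ≤ C ^ d := Real.rpow_nonneg hCnn d
    set ε : ℝ := -F / (C ^ d + 1) with hεdef
    have hεpos : 0 < ε := by
      rw [hεdef]
      apply div_pos (by linarith) (by positivity)
    have h := key ε hεpos
    have hεeq : ε * (C ^ d + 1) = -F := by
      rw [hεdef]; field_simp
    linarith [h, hεeq, hεpos]
  -- Step 2: limit as s → 0⁺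
  set g : ℝ → ℝ := fun u =>
    ∑ m ∈ P.support, MvPolynomial.coeff m P * (u ^ (firstDegree m - l₀) * A m) with hg
  have hcont : Continuous g := by
    apply continuous_finset_sum
    intro m _
    exact continuous_const.mul ((continuous_pow _).mul continuous_const)
  have hgs : ∀ u ∈ Ioc (0:ℝ) 1, 0 ≤ g u := by
    intro u hu
    have h1 := step1 u hu
    rw [expand u] at h1
    have heq : ∀ m ∈ P.support,
        MvPolynomial.coeff m P * (u ^ firstDegree m * A m)
          = u ^ l₀ * (MvPolynomial.coeff m P * (u ^ (firstDegree m - l₀) * A m)) := by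
      intro m hm
      have hle := hmin m hm
      have hpowe : u ^ firstDegree m = u ^ l₀ * u ^ (firstDegree m - l₀) := by
        rw [← pow_add]
        congr 1
        omega
      rw [hpowe]
      ring
    rw [Finset.sum_congr rfl heq, ← Finset.mul_sum] at h1
    have hu0 : (0:ℝ) < u ^ l₀ := pow_pos hu.1 _
    nlinarith [h1, hu0]
  have hg0 : 0 ≤ g 0 := by
    have htend : Tendsto g (𝓝[>] 0) (𝓝 (g 0)) :=
      (hcont.tendsto 0).mono_left nhdsWithin_le_nhds
    refine ge_of_tendsto htend ?_
    filter_upwards [Ioc_mem_nhdsGT (by norm_num : (0:ℝ) < 1)] with u hu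
    exact hgs u hu
  -- Step 3: g 0 = eval of minComponent
  have hgval : g 0 = MvPolynomial.eval (Sum.elim (fun i => X.1 i) fun i => X.2 i)
      (minComponent P) := by
    rw [minComponent, map_sum]
    have hg0eq : g 0 = ∑ m ∈ P.support,
        MvPolynomial.coeff m P * ((0:ℝ) ^ (firstDegree m - l₀) * A m) := rfl
    rw [hg0eq]
    have : ∀ m ∈ P.support,
        MvPolynomial.coeff m P * ((0:ℝ) ^ (firstDegree m - l₀) * A m)
          = if firstDegree m = l₀ then MvPolynomial.coeff m P * A m else 0 := by
      intro m hm
      rcases eq_or_ne (firstDegree m) l₀ with h | h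
      · simp [h]
      · have : firstDegree m - l₀ ≠ 0 := by
          have := hmin m hm
          omega
        simp [zero_pow this, h]
    rw [Finset.sum_congr rfl this, ← Finset.sum_filter]
    refine Finset.sum_congr rfl fun m hm => ?_
    rw [MvPolynomial.eval_monomial, Finsupp.prod_pow, Fintype.prod_sum_type]
    simp only [Sum.elim_inl, Sum.elim_inr, hA]
  rw [← hgval]; exact hg0
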